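/- arXiv:1205.5429 — 3 statements merged into one kernel-verified Lean document; each statement's English description precedes it below -/
import Mathlib

section
/- Let (f_n) be a uniformly equicontinuous sequence of functions from [0,1] to [0,1]. If (f_n) is pointwise Cauchy on the rationals in [0,1] with a given rate (i.e., there is a function M : ℕ → ℕ such that for each k and each of finitely many specified rational points the sequence is 2^{-k}-Cauchy beyond M(k)), then (f_n) converges uniformly at a rate computable from M and the modulus of equicontinuity; in particular, pointwise convergence with a rate on ℚ ∩ [0,1] implies uniform convergence with a rate. -/
open Set

theorem stmt2 (f : ℕ → ℝ → ℝ) (φ' : ℕ → ℕ) (M : ℕ → ℕ)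
    (hmap : ∀ n, ∀ x ∈ Icc (0:ℝ) 1, f n x ∈ Icc (0:ℝ) 1)
    (hequi : ∀ l : ℕ, ∀ n : ℕ, ∀ x ∈ Icc (0:ℝ) 1, ∀ y ∈ Icc (0:ℝ) 1,
      |x - y| < (2:ℝ)^(-(φ' l : ℤ)) → |f n x - f n y| < (2:ℝ)^(-(l:ℤ)))
    (hrate : ∀ k : ℕ, ∀ q : ℚ, (q:ℝ) ∈ Icc (0:ℝ) 1 →
      ∀ n ≥ M k, ∀ n' ≥ M k, |f n (q:ℝ) - f n' (q:ℝ)| < (2:ℝ)^(-(k:ℤ))) :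
    ∃ M' : ℕ → ℕ, ∀ k : ℕ, ∀ n ≥ M' k, ∀ n' ≥ M' k, ∀ x ∈ Icc (0:ℝ) 1,
      |f n x - f n' x| < (2:ℝ)^(-(k:ℤ)) := by
  refine ⟨fun k => M (k + 2), fun k n hn n' hn' x hx => ?_⟩
  -- find a rational q ∈ [0,1] close to x
  have hε : (0:ℝ) < (2:ℝ)^(-(φ' (k+2) : ℤ)) := by positivity
  obtain ⟨q, hq01, hqx⟩ :
      ∃ q : ℚ, (q:ℝ) ∈ Icc (0:ℝ) 1 ∧ |x - (q:ℝ)| < (2:ℝ)^(-(φ' (k+2) : ℤ)) := by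
    rcases eq_or_lt_of_le hx.1 with h0 | h0
    · exact ⟨0, by norm_num, by rw [← h0]; simp [hε]⟩
    · obtain ⟨q, hq1, hq2⟩ := exists_rat_btwn (max_lt h0 (by linarith [hx.1]) :
        max 0 (x - (2:ℝ)^(-(φ' (k+2) : ℤ))) < x)
      refine ⟨q, ⟨le_of_lt (lt_of_le_of_lt (le_max_left _ _) hq1),
        le_trans hq2.le hx.2⟩, ?_⟩
      rw [abs_sub_lt_iff]
      constructor
      · have := lt_of_le_of_lt (le_max_right _ _) hq1
        linarith
      · linarith
  have h1 := hequi (k+2) n x hx (q:ℝ) hq01 hqx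
  have h2 := hequi (k+2) n' x hx (q:ℝ) hq01 hqx
  have h3 := hrate (k+2) q hq01 n hn n' hn'
  have hkey : |f n x - f n' x| < 3 * (2:ℝ)^(-((k:ℤ)+2)) := by
    have : |f n x - f n' x| ≤ |f n x - f n (q:ℝ)| + |f n (q:ℝ) - f n' (q:ℝ)|
        + |f n' (q:ℝ) - f n' x| := by
      have := abs_sub_le (f n x) (f n (q:ℝ)) (f n' x)
      have := abs_sub_le (f n (q:ℝ)) (f n' (q:ℝ)) (f n' x)
      linarith
    have h2' : |f n' (q:ℝ) - f n' x| = |f n' x - f n' (q:ℝ)| := abs_sub_comm _ _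
    push_cast at h1 h2 h3 ⊢
    linarith [h2' ▸ h2]
  have : 3 * (2:ℝ)^(-((k:ℤ)+2)) < (2:ℝ)^(-(k:ℤ)) := by
    have h4 : (2:ℝ)^(-((k:ℤ)+2)) = (2:ℝ)^(-(k:ℤ)) / 4 := by
      rw [neg_add, zpow_add₀ (by norm_num : (2:ℝ) ≠ 0)]
      norm_num
      ring
    rw [h4]
    have : (0:ℝ) < (2:ℝ)^(-(k:ℤ)) := by positivity
    linarith
  linarith
end

section
/- Define F : C([0,1],[0,1]) → [0,1]^ℕ by F(f) = (f(q(i)))_{i∈ℕ}, where q : ℕ → ℚ ∩ [0,1] is a surjective enumeration of the rationals in [0,1], and equip [0,1]^ℕ with the metric d((x_i),(y_i)) = Σ_i 2^{-i}|x_i - y_i|. Then for any uniformly equicontinuous sequence (f_n) of functions [0,1] → [0,1] and any strictly increasing g : ℕ → ℕ, the sequence (F(f_{g(n)})) converges in [0,1]^ℕ if and only if (f_{g(n)}) converges uniformly on [0,1]. -/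
open Set Filter

private lemma two_zpow_eq' (i : ℕ) : (2:ℝ)^(-(i:ℤ)) = (1/2:ℝ)^i := by
  rw [zpow_neg, zpow_natCast, one_div, inv_pow]

theorem stmt4 (q : ℕ → ℚ)
    (hq1 : ∀ i, ((q i : ℝ)) ∈ Icc (0:ℝ) 1)
    (hq2 : ∀ r : ℚ, (r:ℝ) ∈ Icc (0:ℝ) 1 → ∃ i, q i = r)
    (f : ℕ → ℝ → ℝ)
    (hmap : ∀ n, ∀ x ∈ Icc (0:ℝ) 1, f n x ∈ Icc (0:ℝ) 1)
    (hequi : ∀ l : ℕ, ∃ j : ℕ, ∀ n : ℕ, ∀ x ∈ Icc (0:ℝ) 1, ∀ y ∈ Icc (0:ℝ) 1,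
      |x - y| < (2:ℝ)^(-(j:ℤ)) → |f n x - f n y| < (2:ℝ)^(-(l:ℤ)))
    (g : ℕ → ℕ) (hg : StrictMono g) :
    (∃ L : ℕ → ℝ, (∀ i, L i ∈ Icc (0:ℝ) 1) ∧
        Tendsto (fun n => ∑' i : ℕ, (2:ℝ)^(-(i:ℤ)) * |f (g n) ((q i : ℝ)) - L i|)
          atTop (nhds 0))
      ↔ (∃ h : ℝ → ℝ, TendstoUniformlyOn (fun n => f (g n)) h atTop (Icc (0:ℝ) 1)) := by
  have hsumg : Summable (fun i : ℕ => (2:ℝ)^(-(i:ℤ))) := by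
    simp only [two_zpow_eq']
    exact summable_geometric_of_lt_one (by norm_num) (by norm_num)
  have htsumg : ∑' i : ℕ, (2:ℝ)^(-(i:ℤ)) = 2 := by
    simp only [two_zpow_eq']
    rw [tsum_geometric_of_lt_one (by norm_num) (by norm_num)]
    norm_num
  have habs : ∀ (L : ℕ → ℝ), (∀ i, L i ∈ Icc (0:ℝ) 1) →
      ∀ n i, |f (g n) ((q i : ℝ)) - L i| ≤ 1 := by
    intro L hL n i
    have h1 := hmap (g n) _ (hq1 i)
    have h2 := hL i
    rw [abs_sub_le_iff]
    constructor <;> linarith [h1.1, h1.2, h2.1, h2.2]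
  have hsummable : ∀ (L : ℕ → ℝ), (∀ i, L i ∈ Icc (0:ℝ) 1) → ∀ n,
      Summable (fun i : ℕ => (2:ℝ)^(-(i:ℤ)) * |f (g n) ((q i : ℝ)) - L i|) := by
    intro L hL n
    refine Summable.of_nonneg_of_le (fun i => by positivity) (fun i => ?_) hsumg
    calc (2:ℝ)^(-(i:ℤ)) * |f (g n) ((q i : ℝ)) - L i| ≤ (2:ℝ)^(-(i:ℤ)) * 1 :=
          mul_le_mul_of_nonneg_left (habs L hL n i) (by positivity)
      _ = (2:ℝ)^(-(i:ℤ)) := mul_one _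
  constructor
  · rintro ⟨L, hL, hS⟩
    -- pointwise convergence at each q i
    have hpt : ∀ i, Tendsto (fun n => f (g n) ((q i : ℝ))) atTop (nhds (L i)) := by
      intro i
      have key : ∀ n, |f (g n) ((q i : ℝ)) - L i| ≤
          (2:ℝ)^(i:ℤ) * (∑' j : ℕ, (2:ℝ)^(-(j:ℤ)) * |f (g n) ((q j : ℝ)) - L j|) := by
        intro n
        have hle := Summable.le_tsum (hsummable L hL n) i (fun j _ => by positivity)
        calc |f (g n) ((q i : ℝ)) - L i|
            = (2:ℝ)^(i:ℤ) * ((2:ℝ)^(-(i:ℤ)) * |f (g n) ((q i : ℝ)) - L i|) := by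
              rw [← mul_assoc, ← zpow_add₀ (two_ne_zero), add_neg_cancel, zpow_zero, one_mul]
          _ ≤ _ := mul_le_mul_of_nonneg_left hle (by positivity)
      have h0 : Tendsto (fun n => (2:ℝ)^(i:ℤ) *
          (∑' j : ℕ, (2:ℝ)^(-(j:ℤ)) * |f (g n) ((q j : ℝ)) - L j|)) atTop (nhds 0) := by
        simpa using hS.const_mul ((2:ℝ)^(i:ℤ))
      have habs0 : Tendsto (fun n => |f (g n) ((q i : ℝ)) - L i|) atTop (nhds 0) :=
        squeeze_zero (fun n => abs_nonneg _) key h0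
      rw [tendsto_iff_dist_tendsto_zero]
      simpa [Real.dist_eq] using habs0
    -- uniform Cauchy
    have hUC : UniformCauchySeqOn (fun n => f (g n)) atTop (Icc (0:ℝ) 1) := by
      rw [Metric.uniformCauchySeqOn_iff]
      intro ε hε
      obtain ⟨l, hl⟩ : ∃ l : ℕ, (2:ℝ)^(-(l:ℤ)) < ε/4 := by
        obtain ⟨l, hl⟩ := exists_pow_lt_of_lt_one (show (0:ℝ) < ε/4 by linarith)
          (show (1/2:ℝ) < 1 by norm_num)
        exact ⟨l, by rwa [two_zpow_eq']⟩
      obtain ⟨j, hj⟩ := hequi l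
      set m : ℕ := 2^j with hm
      have hmR : (m:ℝ) = (2:ℝ)^j := by push_cast [hm]; ring
      have hm0 : (0:ℝ) < (m:ℝ) := by rw [hmR]; positivity
      have hmesh : ∀ k : ℕ, k ≤ m → (((k:ℚ)/(m:ℚ) : ℚ) : ℝ) ∈ Icc (0:ℝ) 1 := by
        intro k hk
        push_cast
        constructor
        · positivity
        · rw [div_le_one hm0]; exact_mod_cast hk
      set I : ℕ → ℕ := fun k =>
        if hk : (((k:ℚ)/(m:ℚ) : ℚ) : ℝ) ∈ Icc (0:ℝ) 1 then (hq2 _ hk).choose else 0 with hI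
      have hIk : ∀ k : ℕ, k ≤ m → ((q (I k) : ℝ)) = (k:ℝ)/(m:ℝ) := by
        intro k hk
        have hk' := hmesh k hk
        simp only [hI, dif_pos hk']
        have := (hq2 _ hk').choose_spec
        rw [this]
        push_cast
        ring
      have h2l : (0:ℝ) < (2:ℝ)^(-(l:ℤ)) := by positivity
      have hev : ∀ᶠ n in atTop, ∀ k ∈ Finset.range (m+1),
          |f (g n) ((q (I k) : ℝ)) - L (I k)| < (2:ℝ)^(-(l:ℤ)) := by
        rw [eventually_all_finset]
        intro k _
        have := Metric.tendsto_atTop.mp (hpt (I k)) _ h2l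
        obtain ⟨N, hN⟩ := this
        filter_upwards [eventually_ge_atTop N] with n hn
        have := hN n hn
        rwa [Real.dist_eq] at this
      obtain ⟨N, hN⟩ := eventually_atTop.mp hev
      refine ⟨N, fun a ha b hb x hx => ?_⟩
      set k : ℕ := ⌊x * m⌋₊ with hk
      have hx0 : 0 ≤ x * m := mul_nonneg hx.1 hm0.le
      have hk1 : (k:ℝ) ≤ x * m := Nat.floor_le hx0
      have hk2 : x * m < k + 1 := Nat.lt_floor_add_one _
      have hkm : k ≤ m := by
        have hxm : x * m ≤ m := by nlinarith [hx.2]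
        calc k = ⌊x * m⌋₊ := hk
          _ ≤ ⌊(m:ℝ)⌋₊ := Nat.floor_mono hxm
          _ = m := Nat.floor_natCast m
      set r : ℝ := ((q (I k) : ℝ)) with hr
      have hrq : r = (k:ℝ)/(m:ℝ) := hIk k hkm
      have hrI : r ∈ Icc (0:ℝ) 1 := hq1 _
      have hxr : |x - r| < (2:ℝ)^(-(j:ℤ)) := by
        have h2j : (2:ℝ)^(-(j:ℤ)) = 1/(m:ℝ) := by
          rw [hmR, zpow_neg, zpow_natCast, one_div]
        have hle : r ≤ x := by
          rw [hrq, div_le_iff₀ hm0]; exact hk1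
        rw [abs_of_nonneg (by linarith), h2j, hrq]
        rw [sub_lt_iff_lt_add, ← add_div, lt_div_iff₀ hm0]
        linarith
      have e1 : |f (g a) x - f (g a) r| < (2:ℝ)^(-(l:ℤ)) := hj (g a) x hx r hrI hxr
      have e4 : |f (g b) r - f (g b) x| < (2:ℝ)^(-(l:ℤ)) := by
        rw [abs_sub_comm]
        exact hj (g b) x hx r hrI hxr
      have hkmem : k ∈ Finset.range (m+1) := Finset.mem_range.mpr (Nat.lt_succ_of_le hkm)
      have e2 : |f (g a) r - L (I k)| < (2:ℝ)^(-(l:ℤ)) := hN a ha k hkmem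
      have e3 : |L (I k) - f (g b) r| < (2:ℝ)^(-(l:ℤ)) := by
        rw [abs_sub_comm]
        exact hN b hb k hkmem
      rw [Real.dist_eq]
      calc |f (g a) x - f (g b) x|
          ≤ |f (g a) x - f (g a) r| + |f (g a) r - L (I k)| + |L (I k) - f (g b) r|
            + |f (g b) r - f (g b) x| := by
            have t1 : f (g a) x - f (g b) x = (f (g a) x - f (g a) r) + (f (g a) r - L (I k))
                + (L (I k) - f (g b) r) + (f (g b) r - f (g b) x) := by ring
            rw [t1]
            exact le_trans (abs_add_le _ _) (add_le_add_left (abs_add_three _ _ _) _)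
        _ < (2:ℝ)^(-(l:ℤ)) + (2:ℝ)^(-(l:ℤ)) + (2:ℝ)^(-(l:ℤ)) + (2:ℝ)^(-(l:ℤ)) := by
            gcongr
        _ < ε := by linarith
    -- pointwise limit
    have hcau : ∀ x ∈ Icc (0:ℝ) 1, CauchySeq (fun n => f (g n) x) :=
      fun x hx => hUC.cauchySeq hx
    refine ⟨fun x => limUnder atTop (fun n => f (g n) x),
      hUC.tendstoUniformlyOn_of_tendsto fun x hx => (hcau x hx).tendsto_limUnder⟩
  · rintro ⟨h, hu⟩
    have hLpt : ∀ i, Tendsto (fun n => f (g n) ((q i : ℝ))) atTop (nhds (h ((q i : ℝ)))) :=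
      fun i => hu.tendsto_at (hq1 i)
    have hLmem : ∀ i, h ((q i : ℝ)) ∈ Icc (0:ℝ) 1 := fun i =>
      isClosed_Icc.mem_of_tendsto (hLpt i)
        (Eventually.of_forall fun n => hmap (g n) _ (hq1 i))
    refine ⟨fun i => h ((q i : ℝ)), hLmem, ?_⟩
    rw [Metric.tendsto_atTop]
    intro ε hε
    have := (Metric.tendstoUniformlyOn_iff.mp hu) (ε/4) (by linarith)
    obtain ⟨N, hN⟩ := eventually_atTop.mp this
    refine ⟨N, fun n hn => ?_⟩
    have hsum1 := hsummable _ hLmem n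
    have hbd : ∑' i : ℕ, (2:ℝ)^(-(i:ℤ)) * |f (g n) ((q i : ℝ)) - h ((q i : ℝ))|
        ≤ ∑' i : ℕ, (2:ℝ)^(-(i:ℤ)) * (ε/4) := by
      refine Summable.tsum_le_tsum (fun i => ?_) hsum1 (hsumg.mul_right _)
      refine mul_le_mul_of_nonneg_left ?_ (by positivity)
      have := hN n hn ((q i : ℝ)) (hq1 i)
      rw [Real.dist_eq, abs_sub_comm] at this
      exact this.le
    have heq : ∑' i : ℕ, (2:ℝ)^(-(i:ℤ)) * (ε/4) = ε/2 := by
      rw [tsum_mul_right, htsumg]; ring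
    rw [Real.dist_eq, sub_zero, abs_of_nonneg (tsum_nonneg fun i => by positivity)]
    calc ∑' i : ℕ, (2:ℝ)^(-(i:ℤ)) * |f (g n) ((q i : ℝ)) - h ((q i : ℝ))|
        ≤ ε/2 := by rw [← heq]; exact hbd
      _ < ε := by linarith
end

section
/- Let (f_n) be a uniformly equicontinuous sequence of functions [0,1] → [0,1] with modulus φ'. If (f_n) converges pointwise on the dyadic rationals with an explicit rate, then for each k the modulus of uniform Cauchyness can be bounded: if (f_n(y)) is 2^{-(k+2)}-Cauchy beyond m simultaneously for all y in the finite grid Y = { i·2^{-(φ'(k+2)+1)} : 0 ≤ i ≤ 2^{φ'(k+2)+1} }, then ‖f_n - f_{n'}‖_∞ < 2^{-k} for all n,n' > m. -/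
open Set

theorem stmt15 (f : ℕ → ℝ → ℝ) (φ' : ℕ → ℕ)
    (hmap : ∀ n, ∀ x ∈ Icc (0:ℝ) 1, f n x ∈ Icc (0:ℝ) 1)
    (hequi : ∀ l : ℕ, ∀ n : ℕ, ∀ x ∈ Icc (0:ℝ) 1, ∀ y ∈ Icc (0:ℝ) 1,
      |x - y| < (2:ℝ)^(-(φ' l : ℤ)) → |f n x - f n y| < (2:ℝ)^(-(l:ℤ)))
    (k m : ℕ)
    -- (f_n(y)) is 2^{-(k+2)}-Cauchy beyond m simultaneously for all grid points y
    (hgrid : ∀ n > m, ∀ n' > m, ∀ i : ℕ, i ≤ 2^(φ' (k+2) + 1) →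
      |f n ((i : ℝ) * (2:ℝ)^(-((φ' (k+2) : ℤ)+1))) -
        f n' ((i : ℝ) * (2:ℝ)^(-((φ' (k+2) : ℤ)+1)))| < (2:ℝ)^(-((k:ℤ)+2))) :
    ∀ n > m, ∀ n' > m,
      sSup ((fun x => |f n x - f n' x|) '' Icc (0:ℝ) 1) < (2:ℝ)^(-(k:ℤ)) := by
  intro n hn n' hn'
  have hpow : (0:ℝ) < (2:ℝ)^(-((k:ℤ)+2)) := by positivity
  have bound : ∀ x ∈ Icc (0:ℝ) 1, |f n x - f n' x| ≤ 3 * (2:ℝ)^(-((k:ℤ)+2)) := by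
    intro x hx
    obtain ⟨hx0, hx1⟩ := hx
    set e : ℝ := (2:ℝ)^(-((φ' (k+2) : ℤ)+1)) with he
    have he' : e = (2:ℝ)^(-((φ' (k+2) + 1 : ℕ) : ℤ)) := by rw [he, Nat.cast_add, Nat.cast_one]
    have hepos : (0:ℝ) < e := by rw [he]; positivity
    set i : ℕ := ⌊x * 2^(φ' (k+2) + 1)⌋₊ with hi
    have h2pos : (0:ℝ) < (2:ℝ)^(φ' (k+2) + 1) := by positivity
    have hxe : x * 2^(φ' (k+2) + 1) ≥ 0 := by positivity
    have hile : i ≤ 2^(φ' (k+2) + 1) := by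
      apply Nat.floor_le_of_le
      calc x * 2^(φ' (k+2) + 1) ≤ 1 * 2^(φ' (k+2) + 1) := by nlinarith
        _ = ((2^(φ' (k+2) + 1) : ℕ) : ℝ) := by push_cast; ring
    set y : ℝ := (i : ℝ) * e with hy
    have hinv : e * (2:ℝ)^(φ' (k+2) + 1) = 1 := by
      rw [he']
      rw [← zpow_natCast (2:ℝ) (φ' (k+2) + 1), ← zpow_add₀ (by norm_num : (2:ℝ) ≠ 0)]
      rw [show (-((φ' (k+2) + 1 : ℕ):ℤ) + ((φ' (k+2) + 1 : ℕ):ℤ)) = 0 by ring]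
      exact zpow_zero 2
    have hyx : y ≤ x := by
      have h1 : (i:ℝ) ≤ x * 2^(φ' (k+2) + 1) := Nat.floor_le hxe
      have := mul_le_mul_of_nonneg_right h1 hepos.le
      calc y = (i:ℝ) * e := rfl
        _ ≤ x * 2^(φ' (k+2) + 1) * e := by nlinarith
        _ = x := by rw [mul_assoc, mul_comm ((2:ℝ)^(φ' (k+2) + 1)) e, hinv, mul_one]
    have hxy : x - y < e := by
      have h1 : x * 2^(φ' (k+2) + 1) < (i:ℝ) + 1 := Nat.lt_floor_add_one _
      have h2 : x < ((i:ℝ) + 1) * e := by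
        have := mul_lt_mul_of_pos_right h1 hepos
        calc x = x * 2^(φ' (k+2) + 1) * e := by
              rw [mul_assoc, mul_comm ((2:ℝ)^(φ' (k+2) + 1)) e, hinv, mul_one]
          _ < ((i:ℝ) + 1) * e := this
      nlinarith
    have hy0 : 0 ≤ y := by positivity
    have hy1 : y ≤ 1 := le_trans hyx hx1
    have hyI : y ∈ Icc (0:ℝ) 1 := ⟨hy0, hy1⟩
    have habs : |x - y| < (2:ℝ)^(-(φ' (k+2) : ℤ)) := by
      rw [abs_of_nonneg (by linarith)]
      calc x - y < e := hxy
        _ < (2:ℝ)^(-(φ' (k+2) : ℤ)) := by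
          rw [he]
          apply zpow_lt_zpow_right₀ (by norm_num : (1:ℝ) < 2)
          omega
    have h1 := hequi (k+2) n x ⟨hx0, hx1⟩ y hyI habs
    have h2 := hequi (k+2) n' x ⟨hx0, hx1⟩ y hyI habs
    have h3 := hgrid n hn n' hn' i hile
    have hycast : ((k:ℕ)+2 : ℤ) = ((k+2 : ℕ) : ℤ) := by push_cast; ring
    rw [show ((i : ℝ) * (2:ℝ)^(-((φ' (k+2) : ℤ)+1))) = y from rfl] at h3
    have hk2 : -((k:ℤ)+2) = -((k+2:ℕ):ℤ) := by push_cast; ring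
    have h1' : |f n x - f n y| < (2:ℝ)^(-((k:ℤ)+2)) := by rw [hk2]; exact h1
    have h2' : |f n' x - f n' y| < (2:ℝ)^(-((k:ℤ)+2)) := by rw [hk2]; exact h2
    have := abs_sub_abs_le_abs_sub (f n x - f n' x) (f n y - f n' y)
    have t1 := abs_sub_abs_le_abs_sub (f n x) (f n y)
    calc |f n x - f n' x| ≤ |f n x - f n y| + |f n y - f n' y| + |f n' y - f n' x| := by
          have := abs_sub_le (f n x) (f n y) (f n' x)
          have := abs_sub_le (f n y) (f n' y) (f n' x)
          linarith
      _ ≤ 3 * (2:ℝ)^(-((k:ℤ)+2)) := by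
          rw [abs_sub_comm (f n' y)] at *
          linarith
  have hne : ((fun x => |f n x - f n' x|) '' Icc (0:ℝ) 1).Nonempty :=
    ⟨_, mem_image_of_mem _ (by norm_num : (0:ℝ) ∈ Icc (0:ℝ) 1)⟩
  have hsup : sSup ((fun x => |f n x - f n' x|) '' Icc (0:ℝ) 1) ≤ 3 * (2:ℝ)^(-((k:ℤ)+2)) := by
    apply Real.sSup_le
    · rintro v ⟨x, hx, rfl⟩
      exact bound x hx
    · positivity
  have hlt : 3 * (2:ℝ)^(-((k:ℤ)+2)) < (2:ℝ)^(-(k:ℤ)) := by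
    have : (2:ℝ)^(-(k:ℤ)) = 4 * (2:ℝ)^(-((k:ℤ)+2)) := by
      rw [show -(k:ℤ) = 2 + (-((k:ℤ)+2)) by ring, zpow_add₀ (by norm_num : (2:ℝ) ≠ 0)]
      norm_num
    linarith
  linarith
end
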